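/- Let k ≥ 2 be an integer and let p be a pattern containing exactly k distinct variables, each of which occurs at least 4 times in p. Then for every n ≥ 0, there are at least 1.94^n words of length n over a 2-letter alphabet that avoid p. -/

import Mathlib

/-- A word `w` is an instance of the pattern `p` if there is a non-erasing
substitution (equivalently, a non-erasing monoid morphism on free monoids)
sending `p` to `w`. -/
def IsInstance {Δ α : Type*} (p : List Δ) (w : List α) : Prop :=
  ∃ f : Δ → List α, (∀ v, f v ≠ []) ∧ (p.map f).flatten = w

/-- A word `w` avoids the pattern `p` if no factor of `w` is an instance of `p`. -/
def Avoids {Δ α : Type*} (w : List α) (p : List Δ) : Prop :=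
  ∀ x : List α, x <:+: w → ¬ IsInstance p x

open Finset
set_option linter.unusedSectionVars false
set_option linter.deprecated false
set_option maxHeartbeats 1000000

namespace GrowthTwo

private def wordsEq : ℕ → Finset (List (Fin 2))
  | 0 => {[]}
  | n+1 => (Finset.univ ×ˢ wordsEq n).image fun q => q.1 :: q.2

private lemma mem_wordsEq : ∀ {n : ℕ} {w : List (Fin 2)}, w ∈ wordsEq n ↔ w.length = n
  | 0, w => by
      simp only [wordsEq, Finset.mem_singleton]
      exact ⟨fun h => by simp [h], fun h => List.eq_nil_of_length_eq_zero h⟩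
  | n+1, w => by
      simp only [wordsEq, Finset.mem_image, Finset.mem_product, Finset.mem_univ, true_and,
        Prod.exists]
      constructor
      · rintro ⟨a, b, hb, rfl⟩
        simp [(mem_wordsEq (n := n)).mp hb]
      · intro h
        cases w with
        | nil => simp at h
        | cons a w =>
            exact ⟨a, w, by rw [mem_wordsEq]; simpa using h, rfl⟩

private lemma card_wordsEq (n : ℕ) : (wordsEq n).card = 2 ^ n := by
  induction n with
  | zero => simp [wordsEq]
  | succ n ih =>
      rw [wordsEq, Finset.card_image_of_injective _ (by intro a b h; simpa [Prod.ext_iff] using h)]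
      simp [ih, Finset.card_product, pow_succ, mul_comm]

private lemma geom_Icc_le {r : ℝ} (h0 : 0 ≤ r) (h1 : r < 1) (N : ℕ) :
    ∑ ℓ ∈ Finset.Icc 1 N, r ^ ℓ ≤ r / (1 - r) := by
  have hpos : 0 < 1 - r := by linarith
  have h2 : ∑ ℓ ∈ Finset.Icc 1 N, r ^ ℓ = r * ∑ i ∈ Finset.range N, r ^ i := by
    induction N with
    | zero => simp
    | succ N ih =>
        rcases Nat.eq_zero_or_pos N with rfl | hN
        · simp
        · rw [Finset.sum_range_succ, Finset.sum_Icc_succ_top (by omega : 1 ≤ N + 1), ih]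
          ring
  have h3 : (∑ i ∈ Finset.range N, r ^ i) * (1 - r) ≤ 1 := by
    have := geom_sum_mul r N
    have hrN : 0 ≤ r ^ N := pow_nonneg h0 N
    nlinarith
  rw [h2, div_eq_mul_inv]
  apply mul_le_mul_of_nonneg_left _ h0
  rw [inv_eq_one_div, le_div_iff₀ hpos]
  exact h3

section
variable {Δ : Type*} [DecidableEq Δ]

open Classical in
private noncomputable def Af (p : List Δ) (n : ℕ) : Finset (List (Fin 2)) :=
  (wordsEq n).filter (fun w => Avoids w p)

private lemma mem_Af {p : List Δ} {n : ℕ} {w : List (Fin 2)} :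
    w ∈ Af p n ↔ w.length = n ∧ Avoids w p := by
  classical
  simp [Af, mem_wordsEq]

private lemma avoids_of_infix {p : List Δ} {u w : List (Fin 2)} (h : u <:+: w)
    (hw : Avoids w p) : Avoids u p :=
  fun x hx => hw x (hx.trans h)

private lemma instance_ne_nil {p : List Δ} (hp : p ≠ []) {x : List (Fin 2)}
    (hx : IsInstance p x) : x ≠ [] := by
  obtain ⟨f, hf, rfl⟩ := hx
  cases p with
  | nil => exact absurd rfl hp
  | cons v q =>
      simp only [List.map_cons, List.flatten_cons, ne_eq, List.append_eq_nil_iff]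
      intro h
      exact hf v h.1

private lemma avoids_nil {p : List Δ} (hp : p ≠ []) : Avoids ([] : List (Fin 2)) p := by
  intro x hx hi
  exact instance_ne_nil hp hi (List.eq_nil_of_infix_nil hx)

private lemma Af_zero {p : List Δ} (hp : p ≠ []) : Af p 0 = {([] : List (Fin 2))} := by
  classical
  ext w
  simp only [mem_Af, Finset.mem_singleton, List.length_eq_zero_iff]
  constructor
  · rintro ⟨rfl, -⟩; rfl
  · rintro rfl; exact ⟨rfl, avoids_nil hp⟩

private def inst (p : List Δ) (g : {v // v ∈ p.toFinset} → List (Fin 2)) : List (Fin 2) :=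
  (p.attach.map fun e => g ⟨e.1, List.mem_toFinset.mpr e.2⟩).flatten

private lemma inst_map (p : List Δ) (f : Δ → List (Fin 2)) :
    inst p (fun v => f v.1) = (p.map f).flatten := by
  unfold inst
  rw [List.attach_map_val]

private lemma length_inst (p : List Δ) (hocc : ∀ v ∈ p, 4 ≤ p.count v)
    (g : {v // v ∈ p.toFinset} → List (Fin 2)) :
    ∑ v : {v // v ∈ p.toFinset}, 4 * (g v).length ≤ (inst p g).length := by
  classical
  set F : Δ → ℕ := fun v => if h : v ∈ p.toFinset then (g ⟨v, h⟩).length else 0 with hF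
  have h1 : (inst p g).length = (p.map F).sum := by
    rw [inst, List.length_flatten, List.map_map, ← List.attach_map_val (l := p) (f := F)]
    congr 1
    apply List.map_congr_left
    intro e he
    simp only [Function.comp]
    rw [hF]
    simp only []
    rw [dif_pos (List.mem_toFinset.mpr e.2)]
  have h2 : (p.map F).sum = ∑ v ∈ p.toFinset, p.count v * F v := by
    have := Finset.sum_multiset_map_count (↑p : Multiset Δ) F
    simpa [smul_eq_mul] using this
  have h3 : ∑ v : {v // v ∈ p.toFinset}, 4 * (g v).length
      = ∑ v ∈ p.toFinset, 4 * F v := by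
    rw [← Finset.sum_coe_sort p.toFinset (fun v => 4 * F v)]
    apply Finset.sum_congr rfl
    intro v _
    rw [hF]
    simp only []
    rw [dif_pos v.2]
  rw [h1, h2, h3]
  apply Finset.sum_le_sum
  intro v hv
  exact Nat.mul_le_mul_right _ (hocc v (List.mem_toFinset.mp hv))

private lemma length_le_inst (p : List Δ) (hocc : ∀ v ∈ p, 4 ≤ p.count v)
    (g : {v // v ∈ p.toFinset} → List (Fin 2)) (v : {v // v ∈ p.toFinset}) :
    (g v).length ≤ (inst p g).length := by
  calc (g v).length ≤ 4 * (g v).length := by omega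
    _ ≤ ∑ v : {v // v ∈ p.toFinset}, 4 * (g v).length :=
        Finset.single_le_sum (f := fun v => 4 * (g v).length)
          (fun _ _ => Nat.zero_le _) (Finset.mem_univ v)
    _ ≤ _ := length_inst p hocc g

private lemma bad_split (p : List Δ) (hp : p ≠ []) {w : List (Fin 2)} (hw : Avoids w p)
    {c : Fin 2} (hbad : ¬ Avoids (w ++ [c]) p) :
    ∃ g : {v // v ∈ p.toFinset} → List (Fin 2), (∀ v, g v ≠ []) ∧
      ∃ u, u ++ inst p g = w ++ [c] ∧ Avoids u p := by
  rw [Avoids] at hbad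
  push_neg at hbad
  obtain ⟨x, hinf, hi⟩ := hbad
  obtain ⟨s, t, hst⟩ := hinf
  rcases List.eq_nil_or_concat t with rfl | ⟨t', b, rfl⟩
  · rw [List.append_nil] at hst
    obtain ⟨f, hf, hx⟩ := hi
    have hxne : x ≠ [] := instance_ne_nil hp ⟨f, hf, hx⟩
    refine ⟨fun v => f v.1, fun v => hf v.1, s, ?_, ?_⟩
    · rw [inst_map, hx]; exact hst
    · rcases List.eq_nil_or_concat x with rfl | ⟨x', b', rfl⟩
      · exact absurd rfl hxne
      · have : (s ++ x') ++ [b'] = w ++ [c] := by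
          rw [← hst]; simp [List.concat_eq_append]
        have h2 := (List.append_inj' this rfl).1
        exact avoids_of_infix ⟨[], x', by simp [h2]⟩ hw
  · exfalso
    have : (s ++ x ++ t') ++ [b] = w ++ [c] := by
      rw [← hst]; simp [List.append_assoc]
    have h2 := (List.append_inj' this rfl).1
    exact hw x ⟨s, t', h2⟩ hi

private lemma step (k : ℕ) (hk : 2 ≤ k) (p : List Δ) (hp : p ≠ []) (hvars : p.toFinset.card = k)
    (hocc : ∀ v ∈ p, 4 ≤ p.count v) (n : ℕ)
    (IH : ∀ j ≤ n, ((Af p j).card : ℝ) * 1.94 ^ (n - j) ≤ (Af p n).card) :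
    1.94 * ((Af p n).card : ℝ) ≤ (Af p (n+1)).card := by
  classical
  set V := {v // v ∈ p.toFinset} with hV
  have hcardV : Fintype.card V = k := by
    show Fintype.card {v // v ∈ p.toFinset} = k
    rw [Fintype.card_coe, hvars]
  -- good and bad extensions
  set G : Fin 2 → Finset (List (Fin 2)) :=
    fun c => (Af p n).filter (fun w => Avoids (w ++ [c]) p) with hG
  set B : Fin 2 → Finset (List (Fin 2)) :=
    fun c => (Af p n).filter (fun w => ¬ Avoids (w ++ [c]) p) with hB
  have hGB : ∀ c, (G c).card + (B c).card = (Af p n).card := by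
    intro c
    rw [hG, hB]
    exact Finset.card_filter_add_card_filter_not _
  have happinj : ∀ c : Fin 2, Set.InjOn (· ++ [c]) ↑((Af p n).filter
      (fun w => True)) := by intro c a _ b _ h; simpa using h
  -- (1) lower bound via good extensions
  have hA1 : (G 0).card + (G 1).card ≤ (Af p (n+1)).card := by
    have hinj : ∀ (c : Fin 2) (s : Finset (List (Fin 2))), Set.InjOn (· ++ [c]) ↑s :=
      fun c s a _ b _ h => by simpa using h
    have hdisj : Disjoint ((G 0).image (· ++ [0])) ((G 1).image (· ++ [1])) := by
      simp only [Finset.disjoint_left, Finset.mem_image]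
      rintro z ⟨a, _, rfl⟩ ⟨b, _, hEq⟩
      have := (List.append_inj' hEq rfl).2
      simp at this
    have hsub : ((G 0).image (· ++ [0])) ∪ ((G 1).image (· ++ [1])) ⊆ Af p (n+1) := by
      intro z hz
      simp only [Finset.mem_union, Finset.mem_image] at hz
      rcases hz with ⟨a, ha, rfl⟩ | ⟨a, ha, rfl⟩ <;>
      · obtain ⟨ha1, ha2⟩ := Finset.mem_filter.mp ha
        obtain ⟨hlen, _⟩ := mem_Af.mp ha1
        exact mem_Af.mpr ⟨by simp [hlen], ha2⟩
    calc (G 0).card + (G 1).card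
        = (((G 0).image (· ++ [0])) ∪ ((G 1).image (· ++ [1]))).card := by
          rw [Finset.card_union_of_disjoint hdisj,
            Finset.card_image_of_injOn (hinj 0 _), Finset.card_image_of_injOn (hinj 1 _)]
      _ ≤ _ := Finset.card_le_card hsub
  -- (2) the bad sets
  set W : Finset (List (Fin 2)) := (Finset.Icc 1 (n+1)).biUnion wordsEq with hW
  have memW : ∀ {w : List (Fin 2)}, w ∈ W ↔ (1 ≤ w.length ∧ w.length ≤ n+1) := by
    intro w
    rw [hW]
    simp only [Finset.mem_biUnion, Finset.mem_Icc, mem_wordsEq]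
    constructor
    · rintro ⟨ℓ, h1, rfl⟩; omega
    · intro h; exact ⟨w.length, h, rfl⟩
  set PF := Fintype.piFinset (fun _ : V => W) with hPF
  set m : (V → List (Fin 2)) → ℕ := fun g => (inst p g).length with hm
  set Gok := PF.filter (fun g => m g ≤ n + 1) with hGok
  set D : Finset (List (Fin 2) × (V → List (Fin 2))) :=
    Gok.biUnion (fun g => (Af p (n + 1 - m g)).image (fun u => (u, g))) with hD
  have hBD : (B 0).card + (B 1).card ≤ ∑ g ∈ Gok, (Af p (n+1 - m g)).card := by
    have hinj : ∀ (c : Fin 2) (s : Finset (List (Fin 2))), Set.InjOn (· ++ [c]) ↑s :=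
      fun c s a _ b _ h => by simpa using h
    set φ : List (Fin 2) → List (Fin 2) × (V → List (Fin 2)) := fun z =>
      if h : ∃ q : List (Fin 2) × (V → List (Fin 2)),
          q.1 ++ inst p q.2 = z ∧ (∀ v, q.2 v ≠ []) ∧ Avoids q.1 p
        then h.choose else ([], fun _ => []) with hφ
    have hφspec : ∀ z : List (Fin 2),
        (∃ q : List (Fin 2) × (V → List (Fin 2)),
          q.1 ++ inst p q.2 = z ∧ (∀ v, q.2 v ≠ []) ∧ Avoids q.1 p) →
        (φ z).1 ++ inst p (φ z).2 = z ∧ (∀ v, (φ z).2 v ≠ []) ∧ Avoids (φ z).1 p := by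
      intro z h
      rw [hφ]
      simp only [dif_pos h]
      exact h.choose_spec
    set BB := ((B 0).image (· ++ [0])) ∪ ((B 1).image (· ++ [1])) with hBB
    have hBBspec : ∀ z ∈ BB, z.length = n + 1 ∧
        (∃ q : List (Fin 2) × (V → List (Fin 2)),
          q.1 ++ inst p q.2 = z ∧ (∀ v, q.2 v ≠ []) ∧ Avoids q.1 p) := by
      intro z hz
      rw [hBB] at hz
      simp only [Finset.mem_union, Finset.mem_image] at hz
      rcases hz with ⟨a, ha, rfl⟩ | ⟨a, ha, rfl⟩ <;>
      · obtain ⟨ha1, ha2⟩ := Finset.mem_filter.mp ha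
        obtain ⟨hlen, hav⟩ := mem_Af.mp ha1
        obtain ⟨g, hg, u, hu, huav⟩ := bad_split p hp hav ha2
        exact ⟨by simp [hlen], ⟨(u, g), hu, hg, huav⟩⟩
    have hmaps : ∀ z ∈ BB, φ z ∈ D := by
      intro z hz
      obtain ⟨hzlen, hex⟩ := hBBspec z hz
      obtain ⟨h1, h2, h3⟩ := hφspec z hex
      have hlen : (φ z).1.length + m (φ z).2 = n + 1 := by
        have := congrArg List.length h1
        simpa [hm, hzlen] using this
      have hmle : m (φ z).2 ≤ n + 1 := by omega
      have hgW : ∀ v : V, (φ z).2 v ∈ W := by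
        intro v
        rw [memW]
        constructor
        · have := h2 v
          exact List.length_pos_iff.mpr this
        · exact le_trans (length_le_inst p hocc _ v) hmle
      rw [hD]
      rw [Finset.mem_biUnion]
      refine ⟨(φ z).2, ?_, ?_⟩
      · rw [hGok, Finset.mem_filter]
        exact ⟨Fintype.mem_piFinset.mpr hgW, hmle⟩
      · rw [Finset.mem_image]
        exact ⟨(φ z).1, mem_Af.mpr ⟨by omega, h3⟩, rfl⟩
    have hinjφ : Set.InjOn φ ↑BB := by
      intro z1 hz1 z2 hz2 heq
      have e1 := (hφspec z1 (hBBspec z1 (by simpa using hz1)).2).1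
      have e2 := (hφspec z2 (hBBspec z2 (by simpa using hz2)).2).1
      rw [← e1, ← e2, heq]
    have hdisj : Disjoint ((B 0).image (· ++ [0])) ((B 1).image (· ++ [1])) := by
      simp only [Finset.disjoint_left, Finset.mem_image]
      rintro z ⟨a, _, rfl⟩ ⟨b, _, hEq⟩
      have := (List.append_inj' hEq rfl).2
      simp at this
    have hcards : (B 0).card + (B 1).card = BB.card := by
      rw [hBB, Finset.card_union_of_disjoint hdisj,
        Finset.card_image_of_injOn (hinj 0 _), Finset.card_image_of_injOn (hinj 1 _)]
    have hDcard : D.card ≤ ∑ g ∈ Gok, (Af p (n+1 - m g)).card := by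
      rw [hD]
      refine le_trans Finset.card_biUnion_le ?_
      exact Finset.sum_le_sum fun g _ => Finset.card_image_le
    rw [hcards]
    exact le_trans (Finset.card_le_card_of_injOn φ hmaps hinjφ) hDcard
  -- (3) real estimates
  have hy0 : (0:ℝ) ≤ (1.94:ℝ)⁻¹ := by norm_num
  have hy1 : ((1.94:ℝ)⁻¹) ≤ 1 := by norm_num
  have hterm : ∀ g ∈ Gok, ((Af p (n+1 - m g)).card : ℝ) ≤
      ((Af p n).card : ℝ) * 1.94 * ∏ v : V, (((1.94:ℝ)⁻¹)^4)^((g v).length) := by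
    intro g hgok
    obtain ⟨hgPF, hmle⟩ := Finset.mem_filter.mp hgok
    have hglen : ∀ v : V, 1 ≤ (g v).length := by
      intro v
      exact (memW.mp (Fintype.mem_piFinset.mp hgPF v)).1
    have h4 : ∑ v : V, 4 * (g v).length ≤ m g := length_inst p hocc g
    have hm1 : 1 ≤ m g := by
      have h8 : ∑ v : V, 4 * (g v).length ≥ ∑ _v : V, 4 :=
        Finset.sum_le_sum fun v _ => by have := hglen v; omega
      have h9 : ∑ _v : V, 4 = 4 * k := by
        rw [Finset.sum_const, Finset.card_univ, hcardV, smul_eq_mul, mul_comm]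
      omega
    have hj := IH (n+1 - m g) (by omega)
    have hnj : n - (n+1 - m g) = m g - 1 := by omega
    rw [hnj] at hj
    have hxpow : (0:ℝ) < (1.94:ℝ) ^ (m g - 1) := by positivity
    have h5 : ((Af p (n+1-m g)).card : ℝ) ≤ ((Af p n).card : ℝ) * ((1.94:ℝ)⁻¹) ^ (m g - 1) := by
      rw [inv_pow]
      calc ((Af p (n+1-m g)).card : ℝ)
          = ((Af p (n+1-m g)).card : ℝ) * (1.94:ℝ) ^ (m g - 1) * ((1.94:ℝ) ^ (m g - 1))⁻¹ := by
            field_simp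
        _ ≤ ((Af p n).card : ℝ) * ((1.94:ℝ) ^ (m g - 1))⁻¹ := by
            apply mul_le_mul_of_nonneg_right hj
            positivity
    have h6 : ((1.94:ℝ)⁻¹) ^ (m g - 1) = 1.94 * ((1.94:ℝ)⁻¹) ^ (m g) := by
      have : m g = (m g - 1) + 1 := by omega
      rw [this]
      rw [pow_succ]
      field_simp
      simp
    have h7 : ((1.94:ℝ)⁻¹) ^ (m g) ≤ ∏ v : V, (((1.94:ℝ)⁻¹)^4)^((g v).length) := by
      have e1 : ∀ v : V, (((1.94:ℝ)⁻¹)^4)^((g v).length) = ((1.94:ℝ)⁻¹)^(4 * (g v).length) :=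
        fun v => by rw [← pow_mul]
      rw [Finset.prod_congr rfl (fun v _ => e1 v), Finset.prod_pow_eq_pow_sum]
      exact pow_le_pow_of_le_one hy0 hy1 h4
    calc ((Af p (n+1 - m g)).card : ℝ)
        ≤ ((Af p n).card : ℝ) * ((1.94:ℝ)⁻¹) ^ (m g - 1) := h5
      _ = ((Af p n).card : ℝ) * 1.94 * ((1.94:ℝ)⁻¹) ^ (m g) := by rw [h6]; ring
      _ ≤ ((Af p n).card : ℝ) * 1.94 * ∏ v : V, (((1.94:ℝ)⁻¹)^4)^((g v).length) := by
          apply mul_le_mul_of_nonneg_left h7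
          positivity
  have hsum : ∑ g ∈ Gok, ((Af p (n+1 - m g)).card : ℝ) ≤
      ((Af p n).card : ℝ) * 1.94 *
        ∑ g ∈ PF, ∏ v : V, (((1.94:ℝ)⁻¹)^4)^((g v).length) := by
    calc ∑ g ∈ Gok, ((Af p (n+1 - m g)).card : ℝ)
        ≤ ∑ g ∈ Gok, ((Af p n).card : ℝ) * 1.94 * ∏ v : V, (((1.94:ℝ)⁻¹)^4)^((g v).length) :=
          Finset.sum_le_sum hterm
      _ = ((Af p n).card : ℝ) * 1.94 *
            ∑ g ∈ Gok, ∏ v : V, (((1.94:ℝ)⁻¹)^4)^((g v).length) := by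
          rw [Finset.mul_sum]
      _ ≤ _ := by
          apply mul_le_mul_of_nonneg_left _ (by positivity)
          apply Finset.sum_le_sum_of_subset_of_nonneg
          · rw [hGok]; exact Finset.filter_subset _ _
          · intro g _ _
            positivity
  have hprod : ∑ g ∈ PF, ∏ v : V, (((1.94:ℝ)⁻¹)^4)^((g v).length)
      = (∑ w ∈ W, (((1.94:ℝ)⁻¹)^4)^(w.length)) ^ k := by
    rw [hPF, ← Finset.prod_univ_sum (fun _ : V => W)
      (fun _ w => (((1.94:ℝ)⁻¹)^4)^(w.length))]
    rw [Finset.prod_const, Finset.card_univ, hcardV]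
  have hr0 : (0:ℝ) ≤ 2 * ((1.94:ℝ)⁻¹)^4 := by norm_num
  have hr1 : 2 * ((1.94:ℝ)⁻¹)^4 < 1 := by norm_num
  have hWdisj : (↑(Finset.Icc 1 (n+1)) : Set ℕ).PairwiseDisjoint wordsEq := by
    intro i _ j _ hij
    simp only [Finset.disjoint_left]
    intro w hw1 hw2
    rw [mem_wordsEq] at hw1 hw2
    omega
  have hS : ∑ w ∈ W, (((1.94:ℝ)⁻¹)^4)^(w.length)
      ≤ (2 * ((1.94:ℝ)⁻¹)^4) / (1 - 2 * ((1.94:ℝ)⁻¹)^4) := by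
    rw [hW, Finset.sum_biUnion hWdisj]
    have heach : ∀ ℓ ∈ Finset.Icc 1 (n+1),
        ∑ w ∈ wordsEq ℓ, (((1.94:ℝ)⁻¹)^4)^(w.length) = (2 * ((1.94:ℝ)⁻¹)^4)^ℓ := by
      intro ℓ _
      have : ∀ w ∈ wordsEq ℓ, (((1.94:ℝ)⁻¹)^4)^(w.length) = (((1.94:ℝ)⁻¹)^4)^ℓ := by
        intro w hw
        rw [mem_wordsEq.mp hw]
      rw [Finset.sum_congr rfl this, Finset.sum_const, card_wordsEq, nsmul_eq_mul, mul_pow]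
      push_cast
      ring
    rw [Finset.sum_congr rfl heach]
    exact geom_Icc_le hr0 hr1 (n+1)
  have hS0 : (0:ℝ) ≤ ∑ w ∈ W, (((1.94:ℝ)⁻¹)^4)^(w.length) := by positivity
  have hSk : (∑ w ∈ W, (((1.94:ℝ)⁻¹)^4)^(w.length)) ^ k
      ≤ ((2 * ((1.94:ℝ)⁻¹)^4) / (1 - 2 * ((1.94:ℝ)⁻¹)^4)) ^ 2 := by
    have hS1 : ∑ w ∈ W, (((1.94:ℝ)⁻¹)^4)^(w.length) ≤ 1 := by
      refine le_trans hS (by norm_num)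
    calc (∑ w ∈ W, (((1.94:ℝ)⁻¹)^4)^(w.length)) ^ k
        ≤ (∑ w ∈ W, (((1.94:ℝ)⁻¹)^4)^(w.length)) ^ 2 :=
          pow_le_pow_of_le_one hS0 hS1 hk
      _ ≤ _ := by
          apply pow_le_pow_left₀ hS0 hS
  have hnum : (1.94:ℝ) * ((2 * ((1.94:ℝ)⁻¹)^4) / (1 - 2 * ((1.94:ℝ)⁻¹)^4)) ^ 2 ≤ 0.06 := by
    norm_num
  -- put everything together
  have hBfinal : ((B 0).card : ℝ) + ((B 1).card : ℝ) ≤ 0.06 * ((Af p n).card : ℝ) := by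
    have h1 : ((B 0).card : ℝ) + ((B 1).card : ℝ)
        ≤ ∑ g ∈ Gok, ((Af p (n+1 - m g)).card : ℝ) := by
      have := hBD
      push_cast [← Nat.cast_sum]
      exact_mod_cast this
    calc ((B 0).card : ℝ) + ((B 1).card : ℝ)
        ≤ ∑ g ∈ Gok, ((Af p (n+1 - m g)).card : ℝ) := h1
      _ ≤ ((Af p n).card : ℝ) * 1.94 *
            ∑ g ∈ PF, ∏ v : V, (((1.94:ℝ)⁻¹)^4)^((g v).length) := hsum
      _ = ((Af p n).card : ℝ) * (1.94 * (∑ w ∈ W, (((1.94:ℝ)⁻¹)^4)^(w.length)) ^ k) := by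
          rw [hprod]; ring
      _ ≤ ((Af p n).card : ℝ) * 0.06 := by
          apply mul_le_mul_of_nonneg_left _ (by positivity)
          calc 1.94 * (∑ w ∈ W, (((1.94:ℝ)⁻¹)^4)^(w.length)) ^ k
              ≤ 1.94 * ((2 * ((1.94:ℝ)⁻¹)^4) / (1 - 2 * ((1.94:ℝ)⁻¹)^4)) ^ 2 := by
                apply mul_le_mul_of_nonneg_left hSk (by norm_num)
            _ ≤ 0.06 := hnum
      _ = 0.06 * ((Af p n).card : ℝ) := by ring
  have hc1 : ((G 0).card : ℝ) + ((G 1).card : ℝ) ≤ ((Af p (n+1)).card : ℝ) := by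
    exact_mod_cast hA1
  have hc0 : ((G 0).card : ℝ) + ((B 0).card : ℝ) = ((Af p n).card : ℝ) := by
    exact_mod_cast hGB 0
  have hc0' : ((G 1).card : ℝ) + ((B 1).card : ℝ) = ((Af p n).card : ℝ) := by
    exact_mod_cast hGB 1
  linarith


end

end GrowthTwo

/-- If each of the `k ≥ 2` variables of `p` occurs at least 4 times, then for
every `n` there are at least `1.94 ^ n` words of length `n` over a
2-letter alphabet avoiding `p`. -/
theorem growth_two {Δ : Type*} [DecidableEq Δ] (k : ℕ) (hk : 2 ≤ k)
    (p : List Δ) (hvars : p.toFinset.card = k)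
    (hocc : ∀ v ∈ p, 4 ≤ p.count v) (n : ℕ) :
    ((1.94 : ℝ) ^ n) ≤
      ({w : List (Fin 2) | w.length = n ∧ Avoids w p}).ncard := by
  classical
  open GrowthTwo in
  have hp : p ≠ [] := by
    intro h
    rw [h] at hvars
    simp at hvars
    omega
  have hset : {w : List (Fin 2) | w.length = n ∧ Avoids w p} = ↑(GrowthTwo.Af p n) := by
    ext w
    simp [GrowthTwo.mem_Af, Set.mem_setOf_eq]
  rw [hset, Set.ncard_coe_finset]
  have key : ∀ N, ∀ j ≤ N,
      ((GrowthTwo.Af p j).card : ℝ) * 1.94 ^ (N - j) ≤ (GrowthTwo.Af p N).card := by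
    intro N
    induction N with
    | zero =>
        intro j hj
        interval_cases j
        simp
    | succ N ihN =>
        have hstep : 1.94 * ((GrowthTwo.Af p N).card : ℝ) ≤ (GrowthTwo.Af p (N+1)).card :=
          GrowthTwo.step k hk p hp hvars hocc N ihN
        intro j hj
        rcases Nat.lt_or_ge j (N+1) with h | h
        · have hj' : j ≤ N := by omega
          have h1 := ihN j hj'
          have he : (N+1-j) = (N-j)+1 := by omega
          rw [he, pow_succ, ← mul_assoc]
          calc ((GrowthTwo.Af p j).card : ℝ) * 1.94 ^ (N - j) * 1.94
              ≤ ((GrowthTwo.Af p N).card : ℝ) * 1.94 :=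
                mul_le_mul_of_nonneg_right h1 (by norm_num)
            _ = 1.94 * ((GrowthTwo.Af p N).card : ℝ) := by ring
            _ ≤ _ := hstep
        · have hje : j = N+1 := by omega
          subst hje
          simp
  have h0 := key n 0 (Nat.zero_le n)
  rw [GrowthTwo.Af_zero hp] at h0
  simpa using h0
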